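/- Let T > 0, x₀ > 0, and 0 < t₂ < t₁ < T. Let f be C¹ strictly convex with a₁, a₂ defined by f'(a_i) = x₀/(T − t_i) for i = 1, 2, so that a₂ < a₁ (assuming f' is a bijection). Then the line through (x₀, T) with slope s = (f(a₁) − f(a₂))/(a₁ − a₂), i.e. r(θ) = x₀ + (θ − T)·s, crosses the t-axis at a time t₃ with t₂ < t₃ < t₁; that is, there exists t₃ ∈ (t₂, t₁) with x₀ + (t₃ − T)·(f(a₁) − f(a₂))/(a₁ − a₂) = 0. -/

import Mathlib

/-- the secant line through `(x₀, T)` with slope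
`(f(a₁) − f(a₂))/(a₁ − a₂)` crosses the `t`-axis between `t₂` and `t₁`. -/
theorem stmt9 (f : ℝ → ℝ) (hC1 : ContDiff ℝ 1 f)
    (hc : StrictConvexOn ℝ Set.univ f)
    (hbij : Function.Bijective (deriv f))
    (T x0 t1 t2 a1 a2 : ℝ) (hT : 0 < T) (hx0 : 0 < x0)
    (ht2 : 0 < t2) (ht21 : t2 < t1) (ht1 : t1 < T)
    (ha1 : deriv f a1 = x0 / (T - t1)) (ha2 : deriv f a2 = x0 / (T - t2)) :
    a2 < a1 ∧ ∃ t3 : ℝ, t2 < t3 ∧ t3 < t1 ∧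
      x0 + (t3 - T) * ((f a1 - f a2) / (a1 - a2)) = 0 := by
  have hd : Differentiable ℝ f := hC1.differentiable one_ne_zero
  have hT1 : (0:ℝ) < T - t1 := by linarith
  have hT2 : (0:ℝ) < T - t2 := by linarith
  have hmono : StrictMonoOn (deriv f) Set.univ :=
    hc.strictMonoOn_deriv (fun x _ => hd.differentiableAt)
  have hdlt : deriv f a2 < deriv f a1 := by
    rw [ha1, ha2]
    exact div_lt_div_of_pos_left hx0 hT1 (by linarith)
  have ha21 : a2 < a1 := by
    by_contra h
    exact absurd (hmono.monotoneOn trivial trivial (not_lt.mp h)) (not_le.mpr hdlt)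
  set s : ℝ := (f a1 - f a2) / (a1 - a2) with hs
  have hslope : slope f a2 a1 = s := by
    rw [slope_def_field]
  have h1 : deriv f a2 < s := by
    have := hc.deriv_lt_slope trivial trivial ha21 hd.differentiableAt
    rwa [hslope] at this
  have h2 : s < deriv f a1 := by
    have := hc.slope_lt_deriv trivial trivial ha21 hd.differentiableAt
    rwa [hslope] at this
  have hspos : 0 < s := lt_trans (ha2 ▸ div_pos hx0 hT2) h1
  refine ⟨ha21, T - x0 / s, ?_, ?_, ?_⟩
  · have : x0 / s < T - t2 := by
      rw [div_lt_iff₀ hspos]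
      rw [ha2, div_lt_iff₀ hT2] at h1
      linarith [h1]
    linarith
  · have : T - t1 < x0 / s := by
      rw [lt_div_iff₀ hspos]
      rw [ha1, lt_div_iff₀ hT1] at h2
      linarith [h2]
    linarith
  · field_simp; ring
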